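/- Regard 𝓔 as a function of θ with d_ij and d_jk held fixed, and suppose θ* ∈ (0, π) satisfies the equilibrium condition H² = I_H(θ*)²/d_ki(θ*)³. Then d²𝓔/dθ²(θ*) = m_k m_i (4 m_i m_k d_ki(θ*)² − 3 I_H(θ*)) (d_ij d_jk sin θ*)²/(I_H(θ*) d_ki(θ*)⁵). In particular, the equilibrium is energetically stable in θ if and only if 4 m_i m_k d_ki(θ*)² − 3 I_H(θ*) > 0. -/

import Mathlib

/-- Third side from the law of cosines. -/
noncomputable def dki (dij djk θ : ℝ) : ℝ :=
  Real.sqrt (dij ^ 2 + djk ^ 2 - 2 * dij * djk * Real.cos θ)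

/-- Moment of inertia about the rotation axis. -/
noncomputable def IH (mi mj mk IS dij djk θ : ℝ) : ℝ :=
  mi * mj * dij ^ 2 + mj * mk * djk ^ 2 + mk * mi * (dki dij djk θ) ^ 2 + IS

/-- The amended potential `𝓔 = H²/(2 I_H) + U` as a function of
`(d_ij, d_jk, θ)`. -/
noncomputable def amended (mi mj mk IS H dij djk θ : ℝ) : ℝ :=
  H ^ 2 / (2 * IH mi mj mk IS dij djk θ)
    - (mi * mj / dij + mj * mk / djk + mk * mi / dki dij djk θ)

/-- Squared law-of-cosines distance as a function of the angle. -/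
noncomputable def Qf (a b : ℝ) : ℝ → ℝ := fun t => a ^ 2 + b ^ 2 - 2 * a * b * Real.cos t

lemma hasDerivAt_Qf (a b t : ℝ) : HasDerivAt (Qf a b) (2 * a * b * Real.sin t) t := by
  have h := ((Real.hasDerivAt_cos t).const_mul (2 * a * b)).const_sub (a ^ 2 + b ^ 2)
  convert h using 1
  · rfl
  · rfl
  · rfl
  ring

/-- First-derivative formula for the reduced amended potential. -/
noncomputable def gf (H A B a b : ℝ) : ℝ → ℝ := fun t =>
  -(H ^ 2 * B * (2 * a * b * Real.sin t)) / (2 * (A + B * Qf a b t) ^ 2)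
    + B * (2 * a * b * Real.sin t) / (2 * Qf a b t * Real.sqrt (Qf a b t))

lemma hasDerivAt_sqrtQ (a b t : ℝ) (hQ : 0 < Qf a b t) :
    HasDerivAt (fun t => Real.sqrt (Qf a b t))
      (2 * a * b * Real.sin t / (2 * Real.sqrt (Qf a b t))) t := by
  have h := (Real.hasDerivAt_sqrt hQ.ne').comp t (hasDerivAt_Qf a b t)
  convert h using 1
  · rfl
  · rfl
  · rfl
  ring

lemma hasDerivAt_f (H A B C a b t : ℝ) (hA : 0 < A) (hB : 0 < B) (hQ : 0 < Qf a b t) :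
    HasDerivAt (fun t => H ^ 2 / (2 * (A + B * Qf a b t)) - (C + B / Real.sqrt (Qf a b t)))
      (gf H A B a b t) t := by
  have hQd := hasDerivAt_Qf a b t
  have hI : 0 < A + B * Qf a b t := by positivity
  have hr : 0 < Real.sqrt (Qf a b t) := Real.sqrt_pos.mpr hQ
  have hr2 : Real.sqrt (Qf a b t) ^ 2 = Qf a b t := Real.sq_sqrt hQ.le
  have h1 := (hasDerivAt_const t (H ^ 2)).div (((hQd.const_mul B).const_add A).const_mul 2)
    (by positivity)
  have h2 := ((hasDerivAt_const t B).div (hasDerivAt_sqrtQ a b t hQ) hr.ne').const_add C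
  have h := h1.sub h2
  convert h using 1
  · rfl
  · rfl
  · rfl
  unfold gf
  obtain ⟨s, hspos, hs2⟩ : ∃ s, 0 < s ∧ s ^ 2 = Qf a b t := ⟨_, hr, hr2⟩
  rw [← hs2, Real.sqrt_sq hspos.le]
  have hI' : 0 < A + B * s ^ 2 := by positivity
  field_simp
  ring

lemma hasDerivAt_gf (H A B a b t : ℝ) (hA : 0 < A) (hB : 0 < B) (hQ : 0 < Qf a b t) :
    HasDerivAt (gf H A B a b)
      (-(H ^ 2 * B * (2 * a * b * Real.cos t)) / (2 * (A + B * Qf a b t) ^ 2)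
        + H ^ 2 * B ^ 2 * (2 * a * b * Real.sin t) ^ 2 / (A + B * Qf a b t) ^ 3
        + B * (2 * a * b * Real.cos t) / (2 * Qf a b t * Real.sqrt (Qf a b t))
        - 3 * B * (2 * a * b * Real.sin t) ^ 2
            / (4 * Qf a b t ^ 2 * Real.sqrt (Qf a b t))) t := by
  have hQd := hasDerivAt_Qf a b t
  have hI : 0 < A + B * Qf a b t := by positivity
  have hr : 0 < Real.sqrt (Qf a b t) := Real.sqrt_pos.mpr hQ
  have hr2 : Real.sqrt (Qf a b t) ^ 2 = Qf a b t := Real.sq_sqrt hQ.le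
  have hu1 : HasDerivAt (fun t => -(H ^ 2 * B * (2 * a * b * Real.sin t)))
      (-(H ^ 2 * B * (2 * a * b * Real.cos t))) t :=
    (((Real.hasDerivAt_sin t).const_mul (2 * a * b)).const_mul (H ^ 2 * B)).neg
  have hv1 : HasDerivAt (fun t => 2 * (A + B * Qf a b t) ^ 2)
      (2 * ((2 : ℕ) * (A + B * Qf a b t) ^ 1 * (B * (2 * a * b * Real.sin t)))) t :=
    (((hQd.const_mul B).const_add A).pow 2).const_mul 2
  have hu2 : HasDerivAt (fun t => B * (2 * a * b * Real.sin t))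
      (B * (2 * a * b * Real.cos t)) t :=
    ((Real.hasDerivAt_sin t).const_mul (2 * a * b)).const_mul B
  have hv2 : HasDerivAt (fun t => 2 * Qf a b t * Real.sqrt (Qf a b t))
      (2 * (2 * a * b * Real.sin t) * Real.sqrt (Qf a b t)
        + 2 * Qf a b t * (2 * a * b * Real.sin t / (2 * Real.sqrt (Qf a b t)))) t :=
    (hQd.const_mul 2).mul (hasDerivAt_sqrtQ a b t hQ)
  have h := (hu1.div hv1 (by positivity)).add (hu2.div hv2 (by positivity))
  convert h using 1
  · rfl
  · rfl
  · rfl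
  obtain ⟨s, hspos, hs2⟩ : ∃ s, 0 < s ∧ s ^ 2 = Qf a b t := ⟨_, hr, hr2⟩
  rw [← hs2, Real.sqrt_sq hspos.le]
  have hI' : 0 < A + B * s ^ 2 := by positivity
  field_simp
  ring

/-- Second variation in `θ` at a Transitional Resting equilibrium. -/
theorem transitional_resting_second_variation
    (mi mj mk IS H dij djk θs : ℝ)
    (hmi : 0 < mi) (hmj : 0 < mj) (hmk : 0 < mk) (hIS : 0 < IS) (hH : 0 ≤ H)
    (hdij : 0 < dij) (hdjk : 0 < djk) (hθs : θs ∈ Set.Ioo 0 Real.pi)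
    (hequil : H ^ 2 = (IH mi mj mk IS dij djk θs) ^ 2 / (dki dij djk θs) ^ 3) :
    deriv (deriv (fun t => amended mi mj mk IS H dij djk t)) θs =
        mk * mi * (4 * mi * mk * (dki dij djk θs) ^ 2 - 3 * IH mi mj mk IS dij djk θs) *
          (dij * djk * Real.sin θs) ^ 2 /
          (IH mi mj mk IS dij djk θs * (dki dij djk θs) ^ 5) ∧
      (0 < deriv (deriv (fun t => amended mi mj mk IS H dij djk t)) θs ↔
        0 < 4 * mi * mk * (dki dij djk θs) ^ 2 - 3 * IH mi mj mk IS dij djk θs) := by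
  set A := mi * mj * dij ^ 2 + mj * mk * djk ^ 2 + IS with hAdef
  set B := mk * mi with hBdef
  set C := mi * mj / dij + mj * mk / djk with hCdef
  have hA : 0 < A := by positivity
  have hB : 0 < B := by positivity
  have hsin : 0 < Real.sin θs := Real.sin_pos_of_pos_of_lt_pi hθs.1 hθs.2
  have hcos1 : Real.cos θs < 1 := by
    nlinarith [Real.sin_sq_add_cos_sq θs, sq_nonneg (Real.cos θs - 1), mul_pos hsin hsin]
  have hQθ : 0 < Qf dij djk θs := by
    unfold Qf
    nlinarith [sq_nonneg (dij - djk), mul_pos hdij hdjk]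
  have hcont : Continuous (Qf dij djk) := by unfold Qf; continuity
  have hQev : ∀ᶠ t in nhds θs, 0 < Qf dij djk t :=
    (hcont.tendsto θs).eventually (eventually_gt_nhds hQθ)
  -- rewrite `amended` as a clean function of `Qf` near θs
  have heq : (fun t => amended mi mj mk IS H dij djk t) =ᶠ[nhds θs]
      (fun t => H ^ 2 / (2 * (A + B * Qf dij djk t)) - (C + B / Real.sqrt (Qf dij djk t))) := by
    filter_upwards [hQev] with t ht
    have hsq : Real.sqrt (Qf dij djk t) ^ 2 = Qf dij djk t := Real.sq_sqrt ht.le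
    show amended mi mj mk IS H dij djk t = _
    unfold amended IH dki
    rw [show dij ^ 2 + djk ^ 2 - 2 * dij * djk * Real.cos t = Qf dij djk t from rfl, hsq,
      hAdef, hBdef, hCdef]
    ring
  have hderiv1 : deriv (fun t => amended mi mj mk IS H dij djk t) =ᶠ[nhds θs]
      gf H A B dij djk := by
    refine heq.deriv.trans ?_
    filter_upwards [hQev] with t ht
    exact (hasDerivAt_f H A B C dij djk t hA hB ht).deriv
  have hkey : deriv (deriv (fun t => amended mi mj mk IS H dij djk t)) θs =
      deriv (gf H A B dij djk) θs := hderiv1.deriv_eq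
  have hd2 := (hasDerivAt_gf H A B dij djk θs hA hB hQθ).deriv
  -- express dki and IH via Qf
  have hr : 0 < Real.sqrt (Qf dij djk θs) := Real.sqrt_pos.mpr hQθ
  have hr2 : Real.sqrt (Qf dij djk θs) ^ 2 = Qf dij djk θs := Real.sq_sqrt hQθ.le
  have hdki : dki dij djk θs = Real.sqrt (Qf dij djk θs) := rfl
  have hIH : IH mi mj mk IS dij djk θs = A + B * Qf dij djk θs := by
    unfold IH
    rw [hdki, hr2, hAdef, hBdef]; ring
  have hmain : deriv (deriv (fun t => amended mi mj mk IS H dij djk t)) θs =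
      mk * mi * (4 * mi * mk * (dki dij djk θs) ^ 2 - 3 * IH mi mj mk IS dij djk θs) *
        (dij * djk * Real.sin θs) ^ 2 /
        (IH mi mj mk IS dij djk θs * (dki dij djk θs) ^ 5) := by
    rw [hkey, hd2, hIH, hdki]
    rw [hIH, hdki] at hequil
    obtain ⟨s, hspos, hs2⟩ : ∃ s, 0 < s ∧ s ^ 2 = Qf dij djk θs := ⟨_, hr, hr2⟩
    rw [← hs2, Real.sqrt_sq hspos.le] at hequil ⊢
    have hI' : 0 < A + B * s ^ 2 := by positivity
    rw [hequil, hBdef]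
    field_simp
    ring
  refine ⟨hmain, ?_⟩
  rw [hmain]
  have hdkipos : 0 < dki dij djk θs := by rw [hdki]; exact hr
  have hIHpos : 0 < IH mi mj mk IS dij djk θs := by rw [hIH]; positivity
  have hbase : 0 < dij * djk * Real.sin θs := by positivity
  have hc : 0 < mk * mi * (dij * djk * Real.sin θs) ^ 2 /
      (IH mi mj mk IS dij djk θs * (dki dij djk θs) ^ 5) :=
    div_pos (mul_pos (mul_pos hmk hmi) (pow_pos hbase 2))
      (mul_pos hIHpos (pow_pos hdkipos 5))
  rw [show mk * mi * (4 * mi * mk * (dki dij djk θs) ^ 2 - 3 * IH mi mj mk IS dij djk θs) *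
        (dij * djk * Real.sin θs) ^ 2 /
        (IH mi mj mk IS dij djk θs * (dki dij djk θs) ^ 5) =
      (mk * mi * (dij * djk * Real.sin θs) ^ 2 /
        (IH mi mj mk IS dij djk θs * (dki dij djk θs) ^ 5)) *
        (4 * mi * mk * (dki dij djk θs) ^ 2 - 3 * IH mi mj mk IS dij djk θs) from by ring]
  exact mul_pos_iff_of_pos_left hc
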